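/- Every tree is a veto interval graph. -/

import Mathlib

/-- A veto interval: a closed interval `[l, r]` with a veto mark `v`, `l < v < r`. -/
structure VetoInterval where
  l : ℝ
  v : ℝ
  r : ℝ
  hlv : l < v
  hvr : v < r

/-- Two veto intervals are adjacent iff they intersect and neither contains
the veto mark of the other. -/
def VIAdj (a b : VetoInterval) : Prop :=
  (a.v < b.l ∧ b.l < a.r ∧ a.r < b.v) ∨ (b.v < a.l ∧ a.l < b.r ∧ b.r < a.v)

/-- `G` is a veto interval graph. -/
def IsVIGraph {V : Type*} (G : SimpleGraph V) : Prop :=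
  ∃ f : V → VetoInterval, ∀ a b : V, G.Adj a b ↔ VIAdj (f a) (f b)

open SimpleGraph

private lemma veto_dist_adj_le {V : Type*} {G : SimpleGraph V} (h : G.Connected) (root : V)
    {x y : V} (hxy : G.Adj x y) :
    G.dist y root ≤ G.dist x root + 1 := by
  obtain ⟨p, hp⟩ := h.exists_walk_length_eq_dist x root
  have := SimpleGraph.dist_le (Walk.cons hxy.symm p)
  simpa [hp] using this

private lemma veto_dist_adj {V : Type*} {G : SimpleGraph V} (h : G.IsTree) (root : V)
    {a b : V} (hab : G.Adj a b) :
    G.dist a root + 1 = G.dist b root ∨ G.dist b root + 1 = G.dist a root := by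
  have hconn := h.isConnected
  have h1 := veto_dist_adj_le hconn root hab
  have h2 := veto_dist_adj_le hconn root hab.symm
  have hne : G.dist a root ≠ G.dist b root := by
    intro heq
    haveI := Classical.decEq V
    obtain ⟨p, hp⟩ := hconn.exists_walk_length_eq_dist a root
    have hpath : p.IsPath := p.isPath_of_length_eq_dist hp
    by_cases hb : b ∈ p.support
    · have hd := SimpleGraph.dist_le (p.dropUntil b hb)
      have hsum : (p.takeUntil b hb).length + (p.dropUntil b hb).length = p.length := by
        rw [← Walk.length_append, p.take_spec hb]
      have ht : (p.takeUntil b hb).length ≠ 0 := by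
        intro h0
        exact hab.ne (Walk.eq_of_length_eq_zero h0)
      omega
    · have hw : (Walk.cons hab.symm p).IsPath := hpath.cons hb
      obtain ⟨q, hq⟩ := hconn.exists_walk_length_eq_dist b root
      have hqp : q.IsPath := q.isPath_of_length_eq_dist hq
      have heq2 := (h.existsUnique_path b root).unique hw hqp
      have := congrArg Walk.length heq2
      simp only [Walk.length_cons] at this
      omega
  omega

private lemma veto_parent_exists {V : Type*} {G : SimpleGraph V} (h : G.IsTree) (root : V)
    {b : V} (hb : 0 < G.dist b root) :
    ∃ a, G.Adj a b ∧ G.dist a root + 1 = G.dist b root := by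
  obtain ⟨p, hp⟩ := h.isConnected.exists_walk_length_eq_dist b root
  cases p with
  | nil => simp at hp hb
  | @cons _ a _ hadj q =>
    refine ⟨a, hadj.symm, ?_⟩
    have h1 : G.dist a root ≤ q.length := SimpleGraph.dist_le q
    have h2 := veto_dist_adj_le h.isConnected root hadj.symm
    simp only [Walk.length_cons] at hp
    omega

private lemma veto_parent_unique {V : Type*} {G : SimpleGraph V} (h : G.IsTree) (root : V)
    {a a' b : V} (ha : G.Adj a b) (ha' : G.Adj a' b)
    (hd : G.dist a root + 1 = G.dist b root) (hd' : G.dist a' root + 1 = G.dist b root) :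
    a = a' := by
  haveI := Classical.decEq V
  have hconn := h.isConnected
  obtain ⟨p, hp⟩ := hconn.exists_walk_length_eq_dist a root
  obtain ⟨p', hp'⟩ := hconn.exists_walk_length_eq_dist a' root
  have hpath : p.IsPath := p.isPath_of_length_eq_dist hp
  have hpath' : p'.IsPath := p'.isPath_of_length_eq_dist hp'
  have hbp : b ∉ p.support := by
    intro hmem
    have hdle := SimpleGraph.dist_le (p.dropUntil b hmem)
    have hsum : (p.takeUntil b hmem).length + (p.dropUntil b hmem).length = p.length := by
      rw [← Walk.length_append, p.take_spec hmem]
    omega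
  have hbp' : b ∉ p'.support := by
    intro hmem
    have hdle := SimpleGraph.dist_le (p'.dropUntil b hmem)
    have hsum : (p'.takeUntil b hmem).length + (p'.dropUntil b hmem).length = p'.length := by
      rw [← Walk.length_append, p'.take_spec hmem]
    omega
  have hw : (Walk.cons ha.symm p).IsPath := hpath.cons hbp
  have hw' : (Walk.cons ha'.symm p').IsPath := hpath'.cons hbp'
  have heq := (h.existsUnique_path b root).unique hw hw'
  have hs := congrArg Walk.support heq
  simp only [Walk.support_cons] at hs
  have hs2 : a :: p.support.tail = a' :: p'.support.tail := by
    rw [← p.support_eq_cons, ← p'.support_eq_cons]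
    exact List.tail_eq_of_cons_eq hs
  exact (List.cons.injEq _ _ _ _).mp hs2 |>.1

/-- Every tree is a veto interval graph. -/
theorem stmt_5 {V : Type*} [Fintype V] (G : SimpleGraph V) (h : G.IsTree) :
    IsVIGraph G := by
  classical
  obtain ⟨root⟩ := h.isConnected.nonempty
  set n := Fintype.card V with hn
  let e := Fintype.equivFin V
  let d : V → ℕ := fun v => G.dist v root
  let idx : V → ℝ := fun v => 4 * ((e v : ℕ) + 1)
  let M : ℝ := 4 * (n + 1)
  have hidx_lb : ∀ x, (4 : ℝ) ≤ idx x := by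
    intro x
    have : (0 : ℝ) ≤ ((e x : ℕ) : ℝ) := Nat.cast_nonneg _
    simp only [idx]
    nlinarith
  have hidx_ub : ∀ x, idx x ≤ 4 * n := by
    intro x
    have h1 : (e x : ℕ) + 1 ≤ n := (e x).2
    have : (((e x : ℕ) + 1 : ℕ) : ℝ) ≤ (n : ℝ) := Nat.cast_le.mpr h1
    push_cast at this
    simp only [idx]
    linarith
  have hM : M = 4 * n + 4 := by simp only [M]; ring
  have hidx_eq : ∀ x y : V, idx x < idx y + 1 → idx y < idx x + 1 → x = y := by
    intro x y h1 h2
    rcases Nat.lt_trichotomy (e x : ℕ) (e y : ℕ) with hlt | heq | hgt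
    · exfalso
      have : ((e x : ℕ) : ℝ) + 1 ≤ ((e y : ℕ) : ℝ) := by
        have := Nat.cast_le (α := ℝ) |>.mpr hlt
        push_cast at this ⊢
        linarith
      simp only [idx] at h2
      linarith
    · exact e.injective (Fin.ext heq)
    · exfalso
      have : ((e y : ℕ) : ℝ) + 1 ≤ ((e x : ℕ) : ℝ) := by
        have := Nat.cast_le (α := ℝ) |>.mpr hgt
        push_cast at this ⊢
        linarith
      simp only [idx] at h1
      linarith
  -- the parent function
  let par : V → V := fun b =>
    if hb : 0 < d b then (veto_parent_exists h root hb).choose else b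
  have hpar : ∀ b, 0 < d b → G.Adj (par b) b ∧ d (par b) + 1 = d b := by
    intro b hb
    simp only [par, dif_pos hb]
    exact (veto_parent_exists h root hb).choose_spec
  -- the representation
  have hMnonneg : (0 : ℝ) ≤ M := by rw [hM]; positivity
  let f : V → VetoInterval := fun x =>
    { l := if 0 < d x then M * ((d x : ℝ) - 1) + idx (par x) + 1 else -1
      v := M * (d x : ℝ) + idx x
      r := M * (d x : ℝ) + idx x + 2
      hlv := by
        by_cases hx : 0 < d x
        · rw [if_pos hx]
          have h1 := hidx_ub (par x)
          have h2 := hidx_lb x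
          nlinarith [hMnonneg]
        · rw [if_neg hx]
          have h2 := hidx_lb x
          have : (0 : ℝ) ≤ M * (d x : ℝ) := mul_nonneg hMnonneg (Nat.cast_nonneg _)
          linarith
      hvr := by linarith }
  -- key forward lemma
  have key1 : ∀ a b : V, G.Adj a b → d a + 1 = d b →
      (f a).v < (f b).l ∧ (f b).l < (f a).r ∧ (f a).r < (f b).v := by
    intro a b hab hd
    have hb : 0 < d b := by omega
    obtain ⟨hadj, hdist⟩ := hpar b hb
    have hpab : par b = a := veto_parent_unique h root hadj hab hdist hd
    have hcast : (d b : ℝ) - 1 = (d a : ℝ) := by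
      have : ((d a + 1 : ℕ) : ℝ) = (d b : ℝ) := by exact_mod_cast hd
      push_cast at this
      linarith
    have hfl : (f b).l = M * (d a : ℝ) + idx a + 1 := by
      simp only [f, if_pos hb, hpab, hcast]
    have hfv : (f a).v = M * (d a : ℝ) + idx a := rfl
    have hfr : (f a).r = M * (d a : ℝ) + idx a + 2 := rfl
    have hfvb : (f b).v = M * (d b : ℝ) + idx b := rfl
    have hdb : (d b : ℝ) = (d a : ℝ) + 1 := by linarith
    refine ⟨?_, ?_, ?_⟩
    · rw [hfl, hfv]; linarith
    · rw [hfl, hfr]; linarith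
    · rw [hfr, hfvb, hdb]
      have h1 := hidx_ub a
      have h2 := hidx_lb b
      nlinarith [hMnonneg]
  -- key backward lemma
  have key2 : ∀ a b : V, (f a).v < (f b).l → (f b).l < (f a).r → G.Adj a b := by
    intro a b h1 h2
    by_cases hb : 0 < d b
    · obtain ⟨hadj, hdist⟩ := hpar b hb
      set p := par b with hp
      have hcast : (d b : ℝ) - 1 = (d p : ℝ) := by
        have : ((d p + 1 : ℕ) : ℝ) = (d b : ℝ) := by exact_mod_cast hdist
        push_cast at this
        linarith
      have hfl : (f b).l = M * (d p : ℝ) + idx p + 1 := by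
        simp only [f, if_pos hb, hcast]
        rfl
      rw [hfl] at h1 h2
      have hfv : (f a).v = M * (d a : ℝ) + idx a := rfl
      have hfr : (f a).r = M * (d a : ℝ) + idx a + 2 := rfl
      rw [hfv] at h1
      rw [hfr] at h2
      -- show d a = d p
      have hdap : d a = d p := by
        rcases Nat.lt_trichotomy (d a) (d p) with hlt | heq | hgt
        · exfalso
          have hc : (d a : ℝ) + 1 ≤ (d p : ℝ) := by
            have := Nat.cast_le (α := ℝ) |>.mpr hlt
            push_cast at this ⊢
            linarith
          have hu := hidx_ub a
          have hl := hidx_lb p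
          nlinarith
        · exact heq
        · exfalso
          have hc : (d p : ℝ) + 1 ≤ (d a : ℝ) := by
            have := Nat.cast_le (α := ℝ) |>.mpr hgt
            push_cast at this ⊢
            linarith
          have hu := hidx_ub p
          have hl := hidx_lb a
          nlinarith
      have hdr : (d a : ℝ) = (d p : ℝ) := by exact_mod_cast hdap
      rw [hdr] at h1 h2
      have hap : a = p := hidx_eq a p (by linarith) (by linarith)
      rw [hap]
      exact hadj
    · exfalso
      have hfl : (f b).l = -1 := by simp only [f, if_neg hb]
      have hfv : (f a).v = M * (d a : ℝ) + idx a := rfl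
      rw [hfl, hfv] at h1
      have h2' := hidx_lb a
      have : (0 : ℝ) ≤ M * (d a : ℝ) := mul_nonneg hMnonneg (Nat.cast_nonneg _)
      linarith
  refine ⟨f, fun a b => ⟨?_, ?_⟩⟩
  · intro hab
    rcases veto_dist_adj h root hab with hd | hd
    · exact Or.inl (key1 a b hab hd)
    · exact Or.inr (key1 b a hab.symm hd)
  · rintro (⟨h1, h2, _⟩ | ⟨h1, h2, _⟩)
    · exact key2 a b h1 h2
    · exact (key2 b a h1 h2).symm
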